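/- Equality case of extended Karamata: under the hypotheses of the extended Karamata inequality, if in addition Φ is not affine on the interval (0, y₁], the series ∑ Φ(y_k) converges, and ∑_{k=1}^∞ Φ(x_k) = ∑_{k=1}^∞ Φ(y_k), then there exists N ≥ 1 with ∑_{k=1}^N x_k = ∑_{k=1}^N y_k. -/

import Mathlib

open Filter Topology

private lemma karamata_slope_mono (Φ : ℝ → ℝ) (hΦ : ConvexOn ℝ (Set.Ioo 0 1) Φ)
    {a b a' b' : ℝ} (ha : a ∈ Set.Ioo (0:ℝ) 1) (hb' : b' ∈ Set.Ioo (0:ℝ) 1)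
    (hab : a < b) (hab' : a' < b') (h1 : a ≤ a') (h2 : b ≤ b') :
    (Φ b - Φ a)/(b - a) ≤ (Φ b' - Φ a')/(b' - a') := by
  have step1 : (Φ b - Φ a)/(b - a) ≤ (Φ b' - Φ a)/(b' - a) := by
    rcases eq_or_lt_of_le h2 with rfl|h
    · exact le_refl _
    · exact hΦ.secant_mono_aux2 ha hb' hab h
  have step2 : (Φ b' - Φ a)/(b' - a) ≤ (Φ b' - Φ a')/(b' - a') := by
    rcases eq_or_lt_of_le h1 with rfl|h
    · exact le_refl _
    · exact hΦ.secant_mono_aux3 ha hb' h hab'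
  linarith

private lemma karamata_slope_minmax (Φ : ℝ → ℝ) {a b : ℝ} (hab : a ≠ b) :
    (Φ b - Φ a)/(b - a) = (Φ (max a b) - Φ (min a b))/(max a b - min a b) := by
  rcases lt_or_gt_of_ne hab with h|h
  · rw [min_eq_left h.le, max_eq_right h.le]
  · rw [min_eq_right h.le, max_eq_left h.le, ← neg_div_neg_eq]
    ring_nf

set_option maxHeartbeats 2000000 in
theorem extended_karamata_equality (x y : ℕ → ℝ) (hx : Antitone x) (hy : Antitone y)
    (hx01 : ∀ k, x k ∈ Set.Ioo (0 : ℝ) 1) (hy01 : ∀ k, y k ∈ Set.Ioo (0 : ℝ) 1)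
    (hmaj : ∀ N : ℕ, ∑ k ∈ Finset.range N, x k ≤ ∑ k ∈ Finset.range N, y k)
    (hsx : Summable x) (hsy : Summable y)
    (hsum : ∑' k, x k = ∑' k, y k)
    (Φ : ℝ → ℝ) (hΦ : ConvexOn ℝ (Set.Ioo 0 1) Φ)
    (hnotaffine : ¬ ∃ c d : ℝ, ∀ t ∈ Set.Ioc (0 : ℝ) (y 0), Φ t = c * t + d)
    (L : ℝ)
    (hLy : Tendsto (fun N => ∑ k ∈ Finset.range N, Φ (y k)) atTop (𝓝 L))
    (hLx : Tendsto (fun N => ∑ k ∈ Finset.range N, Φ (x k)) atTop (𝓝 L)) :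
    ∃ N : ℕ, 1 ≤ N ∧ ∑ k ∈ Finset.range N, x k = ∑ k ∈ Finset.range N, y k := by
  by_contra hcon
  push_neg at hcon
  -- basic positivity
  have hx0 : ∀ k, 0 < x k := fun k => (hx01 k).1
  have hy0 : ∀ k, 0 < y k := fun k => (hy01 k).1
  -- the deficiency function
  set D : ℕ → ℝ := fun N => ∑ k ∈ Finset.range N, x k - ∑ k ∈ Finset.range N, y k with hDdef
  have hD0 : D 0 = 0 := by simp [hDdef]
  have hDstep : ∀ k, D (k+1) - D k = x k - y k := by
    intro k
    simp only [hDdef, Finset.sum_range_succ]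
    ring
  have hDneg : ∀ N, 1 ≤ N → D N < 0 := by
    intro N hN
    have := hmaj N
    have h2 := hcon N hN
    simp only [hDdef]
    cases lt_or_eq_of_le this with
    | inl h => linarith
    | inr h => exact absurd h h2
  have hDle : ∀ N, D N ≤ 0 := by
    intro N
    cases N with
    | zero => simp [hD0]
    | succ n => exact (hDneg (n+1) (Nat.succ_le_succ (Nat.zero_le n))).le
  have hDlim : Tendsto D atTop (𝓝 0) := by
    have h1 := hsx.hasSum.tendsto_sum_nat
    have h2 := hsy.hasSum.tendsto_sum_nat
    have := h1.sub h2
    rw [hsum, sub_self] at this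
    exact this
  have hxlim : Tendsto x atTop (𝓝 0) := hsx.tendsto_atTop_zero
  have hylim : Tendsto y atTop (𝓝 0) := hsy.tendsto_atTop_zero
  have hx0y0 : x 0 < y 0 := by
    have := hDneg 1 le_rfl
    simp [hDdef] at this
    exact this
  have hxley : ∀ k, x k ≤ y 0 := fun k => (hx (Nat.zero_le k)).trans hx0y0.le
  have hyley : ∀ k, y k ≤ y 0 := fun k => hy (Nat.zero_le k)
  -- there are infinitely many indices with x k ≠ y k
  have hnondeg : ∀ N : ℕ, ∃ k, N ≤ k ∧ x k ≠ y k := by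
    intro N
    by_contra h
    push_neg at h
    have hconst : ∀ m, D (N + 1 + m) = D (N + 1) := by
      intro m
      induction m with
      | zero => rfl
      | succ n ih =>
        have h1 := hDstep (N + 1 + n)
        have h2 := h (N + 1 + n) (by omega)
        have h3 : N + 1 + (n + 1) = (N + 1 + n) + 1 := by omega
        rw [h3]
        rw [h2] at h1
        linarith
    have hlim2 : Tendsto (fun m => D (N + 1 + m)) atTop (𝓝 0) :=
      hDlim.comp (tendsto_add_atTop_nat (N+1)) |>.congr (fun m => by
        simp [Function.comp, Nat.add_comm])
    have hlc : Tendsto (fun _ : ℕ => D (N + 1)) atTop (𝓝 0) := hlim2.congr (fun m => hconst m)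
    have h0 : D (N + 1) = 0 := tendsto_nhds_unique tendsto_const_nhds hlc
    have := hDneg (N + 1) (by omega)
    linarith
  -- slopes of chords
  set σ : ℕ → ℝ := fun k => (Φ (y k) - Φ (x k)) / (y k - x k) with hσdef
  have hσminmax : ∀ k, x k ≠ y k →
      σ k = (Φ (max (x k) (y k)) - Φ (min (x k) (y k))) / (max (x k) (y k) - min (x k) (y k)) :=
    fun k h => karamata_slope_minmax Φ h
  have hminmem : ∀ k, min (x k) (y k) ∈ Set.Ioo (0:ℝ) 1 := by
    intro k
    rcases min_choice (x k) (y k) with h|h <;> rw [h]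
    exacts [hx01 k, hy01 k]
  have hmaxmem : ∀ k, max (x k) (y k) ∈ Set.Ioo (0:ℝ) 1 := by
    intro k
    rcases max_choice (x k) (y k) with h|h <;> rw [h]
    exacts [hx01 k, hy01 k]
  have hσmono : ∀ j k, j ≤ k → x j ≠ y j → x k ≠ y k → σ k ≤ σ j := by
    intro j k hjk hj hk
    rw [hσminmax j hj, hσminmax k hk]
    exact karamata_slope_mono Φ hΦ (hminmem k) (hmaxmem j)
      (lt_of_le_of_ne (min_le_max) (by
        rcases lt_or_gt_of_ne hk with h|h
        · rw [min_eq_left h.le, max_eq_right h.le]; exact h.ne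
        · rw [min_eq_right h.le, max_eq_left h.le]; exact h.ne))
      (lt_of_le_of_ne (min_le_max) (by
        rcases lt_or_gt_of_ne hj with h|h
        · rw [min_eq_left h.le, max_eq_right h.le]; exact h.ne
        · rw [min_eq_right h.le, max_eq_left h.le]; exact h.ne))
      (min_le_min (hx hjk) (hy hjk)) (max_le_max (hx hjk) (hy hjk))
  -- monotone extension of the slopes
  set t : ℕ → ℝ := fun N => sSup (σ '' {k | N ≤ k ∧ x k ≠ y k}) with htdef
  have hSne : ∀ N, (σ '' {k | N ≤ k ∧ x k ≠ y k}).Nonempty := by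
    intro N
    obtain ⟨k, hk1, hk2⟩ := hnondeg N
    exact ⟨σ k, k, ⟨hk1, hk2⟩, rfl⟩
  have hSbdd : ∀ N, BddAbove (σ '' {k | N ≤ k ∧ x k ≠ y k}) := by
    intro N
    refine ⟨σ 0, ?_⟩
    rintro s ⟨k, ⟨_, hk⟩, rfl⟩
    exact hσmono 0 k (Nat.zero_le k) hx0y0.ne hk
  have htmono : ∀ N M, N ≤ M → t M ≤ t N := by
    intro N M hNM
    exact csSup_le_csSup (hSbdd N) (hSne M)
      (Set.image_mono (fun k hk => ⟨le_trans hNM hk.1, hk.2⟩))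
  have htnondeg : ∀ k, x k ≠ y k → t k = σ k := by
    intro k hk
    apply le_antisymm
    · apply csSup_le (hSne k)
      rintro s ⟨j, ⟨hj1, hj2⟩, rfl⟩
      exact hσmono k j hj1 hk hj2
    · exact le_csSup (hSbdd k) ⟨k, ⟨le_rfl, hk⟩, rfl⟩
  have htid : ∀ k, Φ (x k) - Φ (y k) = t k * (x k - y k) := by
    intro k
    by_cases hk : x k = y k
    · rw [hk]; ring
    · rw [htnondeg k hk, hσdef]
      have hne : y k - x k ≠ 0 := sub_ne_zero.mpr (Ne.symm hk)
      field_simp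
      ring
  -- the partial sums of the differences tend to 0
  have hLHS : Tendsto (fun N => ∑ k ∈ Finset.range N, (Φ (x k) - Φ (y k))) atTop (𝓝 0) := by
    have := hLx.sub hLy
    rw [sub_self] at this
    simpa [Finset.sum_sub_distrib] using this
  -- Abel summation identity
  set Q : ℕ → ℝ := fun N => ∑ k ∈ Finset.range N, (t k - t (k+1)) * (-(D (k+1))) with hQdef
  have hAbel : ∀ N, ∑ k ∈ Finset.range (N+1), (Φ (x k) - Φ (y k)) = t N * D (N+1) - Q N := by
    intro N
    induction N with
    | zero =>
      have hD1 : D 1 = x 0 - y 0 := by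
        have := hDstep 0
        rw [hD0] at this
        linarith
      simp only [hQdef, Finset.range_zero, Finset.sum_empty, zero_add, Finset.sum_range_one]
      rw [htid 0, hD1]
      ring
    | succ n ih =>
      rw [Finset.sum_range_succ, ih, htid (n+1)]
      have h1 : x (n+1) - y (n+1) = D (n+2) - D (n+1) := (hDstep (n+1)).symm
      have h2 : Q (n+1) = Q n + (t n - t (n+1)) * (-(D (n+1))) := by
        simp only [hQdef, Finset.sum_range_succ]
      rw [h1, h2]
      ring
  -- summability of the absolute differences
  have habs : Summable (fun k => |Φ (x k) - Φ (y k)|) := by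
    have hy0mem : y 0 ∈ Set.Ioo (0:ℝ) 1 := hy01 0
    by_cases hmono : ∀ u v : ℝ, 0 < u → u ≤ v → v ≤ y 0 → Φ u ≤ Φ v
    · set w : ℝ := (1 + y 0)/2 with hwdef
      set w' : ℝ := (3 + y 0)/4 with hw'def
      have hw : w ∈ Set.Ioo (0:ℝ) 1 := by
        constructor <;> [nlinarith [hy0mem.1, hy0mem.2]; nlinarith [hy0mem.1, hy0mem.2]]
      have hw' : w' ∈ Set.Ioo (0:ℝ) 1 := by
        constructor <;> [nlinarith [hy0mem.1, hy0mem.2]; nlinarith [hy0mem.1, hy0mem.2]]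
      have hy0w : y 0 < w := by nlinarith [hy0mem.2]
      have hww' : w < w' := by nlinarith [hy0mem.2]
      set K0 : ℝ := (Φ w' - Φ w)/(w' - w) with hK0def
      have hUp : ∀ u v : ℝ, 0 < u → u < v → v ≤ y 0 → Φ v - Φ u ≤ K0 * (v - u) := by
        intro u v hu huv hvy
        have hmem : u ∈ Set.Ioo (0:ℝ) 1 := ⟨hu, by nlinarith [hy0mem.2]⟩
        have hs := karamata_slope_mono Φ hΦ hmem hw' huv hww' (by nlinarith) (by nlinarith)
        rw [div_le_div_iff₀ (by linarith) (by linarith)] at hs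
        rw [hK0def, div_mul_eq_mul_div, le_div_iff₀ (by linarith : (0:ℝ) < w' - w)]
        nlinarith [hs]
      have hbound : ∀ k, |Φ (x k) - Φ (y k)| ≤ K0 * |x k - y k| := by
        intro k
        rcases lt_trichotomy (x k) (y k) with h|h|h
        · have h1 : Φ (x k) ≤ Φ (y k) := hmono _ _ (hx0 k) h.le (hyley k)
          have h2 := hUp (x k) (y k) (hx0 k) h (hyley k)
          rw [abs_of_nonpos (by linarith), abs_of_neg (by linarith)]
          linarith
        · simp [h, abs_nonneg]
        · have h1 : Φ (y k) ≤ Φ (x k) := hmono _ _ (hy0 k) h.le (hxley k)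
          have h2 := hUp (y k) (x k) (hy0 k) h (hxley k)
          rw [abs_of_nonneg (by linarith), abs_of_pos (by linarith)]
          linarith
      have hsummable : Summable fun k => K0 * |x k - y k| :=
        (summable_abs_iff.mpr (hsx.sub hsy)).mul_left K0
      exact Summable.of_nonneg_of_le (fun k => abs_nonneg _) hbound hsummable
    · push_neg at hmono
      obtain ⟨u, v, hu0, huv, hvy, hΦuv⟩ := hmono
      have hult : u < v := lt_of_le_of_ne huv (fun h => by rw [h] at hΦuv; exact lt_irrefl _ hΦuv)
      have humem : u ∈ Set.Ioo (0:ℝ) 1 := ⟨hu0, lt_of_le_of_lt (huv.trans hvy) hy0mem.2⟩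
      have hvmem : v ∈ Set.Ioo (0:ℝ) 1 := ⟨lt_of_lt_of_le hu0 huv, lt_of_le_of_lt hvy hy0mem.2⟩
      have hdec : ∀ a b : ℝ, 0 < a → a ≤ b → b ≤ u → Φ b ≤ Φ a := by
        intro a b ha hab hbu
        rcases eq_or_lt_of_le hab with rfl|hab
        · exact le_refl _
        · have hamem : a ∈ Set.Ioo (0:ℝ) 1 := ⟨ha, by linarith [humem.2]⟩
          have hs := karamata_slope_mono Φ hΦ hamem hvmem hab hult (by linarith) (by linarith)
          have hsv : (Φ v - Φ u)/(v - u) < 0 := div_neg_of_neg_of_pos (by linarith) (by linarith)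
          have hle : (Φ b - Φ a)/(b - a) ≤ 0 := le_trans hs hsv.le
          have h3 := mul_nonpos_of_nonpos_of_nonneg hle (by linarith : (0:ℝ) ≤ b - a)
          rw [div_mul_cancel₀ _ (by linarith : b - a ≠ 0)] at h3
          linarith
      have hΦylim : Tendsto (fun N => Φ (y N)) atTop (𝓝 0) := by
        have h1 := (hLy.comp (tendsto_add_atTop_nat 1)).sub hLy
        rw [sub_self] at h1
        refine h1.congr fun N => ?_
        simp [Function.comp, Finset.sum_range_succ]
      have hneg : ∀ a : ℝ, 0 < a → a ≤ u → Φ a ≤ 0 := by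
        intro a ha hau
        refine ge_of_tendsto hΦylim ?_
        filter_upwards [hylim.eventually (gt_mem_nhds ha)] with j hj
        exact hdec (y j) a (hy0 j) hj.le hau
      obtain ⟨K1, hK1⟩ : ∃ K1 : ℕ, ∀ j, K1 ≤ j → x j ≤ u ∧ y j ≤ u := by
        have h1 := hxlim.eventually (gt_mem_nhds hu0)
        have h2 := hylim.eventually (gt_mem_nhds hu0)
        obtain ⟨K, hK⟩ := (h1.and h2).exists_forall_of_atTop
        exact ⟨K, fun j hj => ⟨(hK j hj).1.le, (hK j hj).2.le⟩⟩
      have hkey : ∀ j, K1 ≤ j → |Φ (x j) - Φ (y j)| ≤ -Φ (x j) + -Φ (y j) := by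
        intro j hj
        have h1 := hneg (x j) (hx0 j) (hK1 j hj).1
        have h2 := hneg (y j) (hy0 j) (hK1 j hj).2
        calc |Φ (x j) - Φ (y j)| ≤ |Φ (x j)| + |Φ (y j)| := abs_sub _ _
          _ = -Φ (x j) + -Φ (y j) := by rw [abs_of_nonpos h1, abs_of_nonpos h2]
      obtain ⟨bx, hbx⟩ : BddBelow (Set.range fun N => ∑ k ∈ Finset.range N, Φ (x k)) :=
        hLx.bddBelow_range
      obtain ⟨by', hby⟩ : BddBelow (Set.range fun N => ∑ k ∈ Finset.range N, Φ (y k)) :=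
        hLy.bddBelow_range
      have hsum_shift : Summable (fun j => |Φ (x (j + K1)) - Φ (y (j + K1))|) := by
        apply summable_of_sum_range_le
          (c := (∑ k ∈ Finset.range K1, Φ (x k)) + (∑ k ∈ Finset.range K1, Φ (y k)) - bx - by')
          (fun j => abs_nonneg _)
        intro n
        have hstep : ∑ j ∈ Finset.range n, |Φ (x (j + K1)) - Φ (y (j + K1))|
            ≤ ∑ j ∈ Finset.range n, (-Φ (x (j + K1)) + -Φ (y (j + K1))) := by
          apply Finset.sum_le_sum
          intro j _
          exact hkey (j + K1) (Nat.le_add_left _ _)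
        have hx_id : ∑ j ∈ Finset.range n, Φ (x (j + K1))
            = (∑ k ∈ Finset.range (K1 + n), Φ (x k)) - ∑ k ∈ Finset.range K1, Φ (x k) := by
          rw [Finset.sum_range_add]
          simp [Nat.add_comm]
        have hy_id : ∑ j ∈ Finset.range n, Φ (y (j + K1))
            = (∑ k ∈ Finset.range (K1 + n), Φ (y k)) - ∑ k ∈ Finset.range K1, Φ (y k) := by
          rw [Finset.sum_range_add]
          simp [Nat.add_comm]
        have hbx2 : bx ≤ ∑ k ∈ Finset.range (K1 + n), Φ (x k) := hbx ⟨K1 + n, rfl⟩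
        have hby2 : by' ≤ ∑ k ∈ Finset.range (K1 + n), Φ (y k) := hby ⟨K1 + n, rfl⟩
        rw [Finset.sum_add_distrib] at hstep
        simp only [Finset.sum_neg_distrib] at hstep
        rw [hx_id, hy_id] at hstep
        linarith
      exact (summable_nat_add_iff K1).mp hsum_shift
  -- the boundary term estimate
  have hDtail : ∀ N : ℕ, -D N = ∑' k, (x (k + N) - y (k + N)) := by
    intro N
    have hx' := Summable.sum_add_tsum_nat_add N hsx
    have hy' := Summable.sum_add_tsum_nat_add N hsy
    have hsub : ∑' k, (x (k+N) - y (k+N)) = (∑' k, x (k+N)) - ∑' k, y (k+N) :=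
      Summable.tsum_sub ((summable_nat_add_iff N).2 hsx) ((summable_nat_add_iff N).2 hsy)
    simp only [hDdef]
    rw [hsub]
    have hss := hsum
    linarith
  have hbnd : ∀ N, t N * D (N+1) ≤ ∑' k, |Φ (x (k + (N+1))) - Φ (y (k + (N+1)))| := by
    intro N
    by_cases ht : 0 ≤ t N
    · calc t N * D (N+1) ≤ 0 := mul_nonpos_of_nonneg_of_nonpos ht (hDle (N+1))
        _ ≤ ∑' k, |Φ (x (k + (N+1))) - Φ (y (k + (N+1)))| :=
          tsum_nonneg (fun k => abs_nonneg _)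
    · push_neg at ht
      have hterm : ∀ k, (-t N) * (x (k + (N+1)) - y (k + (N+1)))
          ≤ |Φ (x (k + (N+1))) - Φ (y (k + (N+1)))| := by
        intro k
        have hjt : t (k + (N+1)) ≤ t N := htmono N (k + (N+1)) (by omega)
        have h1 : (-t N) * (x (k + (N+1)) - y (k + (N+1)))
            ≤ (-t N) * |x (k + (N+1)) - y (k + (N+1))| :=
          mul_le_mul_of_nonneg_left (le_abs_self _) (by linarith)
        have h2 : (-t N) * |x (k + (N+1)) - y (k + (N+1))|
            ≤ (-t (k + (N+1))) * |x (k + (N+1)) - y (k + (N+1))| :=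
          mul_le_mul_of_nonneg_right (by linarith) (abs_nonneg _)
        have h3 : (-t (k + (N+1))) * |x (k + (N+1)) - y (k + (N+1))|
            = |t (k + (N+1)) * (x (k + (N+1)) - y (k + (N+1)))| := by
          rw [abs_mul, abs_of_neg (lt_of_le_of_lt hjt ht)]
        have h4 : |t (k + (N+1)) * (x (k + (N+1)) - y (k + (N+1)))|
            = |Φ (x (k + (N+1))) - Φ (y (k + (N+1)))| := by
          rw [← htid (k + (N+1))]
        linarith
      have hsl : Summable (fun k => (-t N) * (x (k + (N+1)) - y (k + (N+1)))) :=
        Summable.mul_left _ ((summable_nat_add_iff (N+1)).2 (hsx.sub hsy))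
      have hsr : Summable (fun k => |Φ (x (k + (N+1))) - Φ (y (k + (N+1)))|) :=
        (summable_nat_add_iff (N+1)).2 habs
      calc t N * D (N+1) = (-t N) * (-D (N+1)) := by ring
        _ = (-t N) * ∑' k, (x (k + (N+1)) - y (k + (N+1))) := by rw [hDtail (N+1)]
        _ = ∑' k, (-t N) * (x (k + (N+1)) - y (k + (N+1))) := (tsum_mul_left).symm
        _ ≤ ∑' k, |Φ (x (k + (N+1))) - Φ (y (k + (N+1)))| := Summable.tsum_le_tsum hterm hsl hsr
  -- the tails tend to zero
  have hTlim : Tendsto (fun N => ∑' k, |Φ (x (k + N)) - Φ (y (k + N))|) atTop (𝓝 0) := by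
    have hid : ∀ N : ℕ, ∑' k, |Φ (x (k + N)) - Φ (y (k + N))|
        = (∑' k, |Φ (x k) - Φ (y k)|) - ∑ k ∈ Finset.range N, |Φ (x k) - Φ (y k)| := by
      intro N
      have := Summable.sum_add_tsum_nat_add N habs
      linarith
    have h1 : Tendsto (fun N => (∑' k, |Φ (x k) - Φ (y k)|)
        - ∑ k ∈ Finset.range N, |Φ (x k) - Φ (y k)|) atTop (𝓝 0) := by
      have h0 : Tendsto (fun _ : ℕ => ∑' k, |Φ (x k) - Φ (y k)|) atTop
          (𝓝 (∑' k, |Φ (x k) - Φ (y k)|)) := tendsto_const_nhds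
      have := h0.sub habs.hasSum.tendsto_sum_nat
      rw [sub_self] at this
      exact this
    exact h1.congr (fun N => (hid N).symm)
  -- Q vanishes identically
  have hQzero : ∀ N, Q N = 0 := by
    have hQnonneg : ∀ N, 0 ≤ Q N := by
      intro N
      apply Finset.sum_nonneg
      intro k _
      exact mul_nonneg (sub_nonneg.2 (htmono k (k+1) (Nat.le_succ k)))
        (neg_nonneg.2 (hDle (k+1)))
    have hQmono : ∀ N M, N ≤ M → Q N ≤ Q M := by
      intro N M hNM
      apply Finset.sum_le_sum_of_subset_of_nonneg (Finset.range_subset_range.mpr hNM)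
      intro k _ _
      exact mul_nonneg (sub_nonneg.2 (htmono k (k+1) (Nat.le_succ k)))
        (neg_nonneg.2 (hDle (k+1)))
    have hQform : ∀ M, Q M = t M * D (M+1) - ∑ k ∈ Finset.range (M+1), (Φ (x k) - Φ (y k)) := by
      intro M
      have := hAbel M
      linarith
    intro N
    refine le_antisymm ?_ (hQnonneg N)
    have hlim : Tendsto (fun M => (∑' k, |Φ (x (k + (M+1))) - Φ (y (k + (M+1)))|)
        - ∑ k ∈ Finset.range (M+1), (Φ (x k) - Φ (y k))) atTop (𝓝 0) := by
      have h1 := hTlim.comp (tendsto_add_atTop_nat 1)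
      have h2 := hLHS.comp (tendsto_add_atTop_nat 1)
      have := h1.sub h2
      rw [sub_self] at this
      exact this
    refine ge_of_tendsto hlim ?_
    filter_upwards [eventually_ge_atTop N] with M hM
    calc Q N ≤ Q M := hQmono N M hM
      _ = t M * D (M+1) - ∑ k ∈ Finset.range (M+1), (Φ (x k) - Φ (y k)) := hQform M
      _ ≤ (∑' k, |Φ (x (k + (M+1))) - Φ (y (k + (M+1)))|)
          - ∑ k ∈ Finset.range (M+1), (Φ (x k) - Φ (y k)) := by linarith [hbnd M]
  -- therefore t is constant
  have htconst : ∀ k, t k = t 0 := by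
    intro k
    induction k with
    | zero => rfl
    | succ n ih =>
      have h := hQzero (n+1)
      have h2 : Q (n+1) - Q n = 0 := by rw [h, hQzero n]; ring
      have h3 : (t n - t (n+1)) * (-(D (n+1))) = 0 := by
        simp only [hQdef, Finset.sum_range_succ] at h2 ⊢
        linarith [h2]
      have h4 : -(D (n+1)) > 0 := by linarith [hDneg (n+1) (Nat.succ_le_succ (Nat.zero_le n))]
      have h5 : t n - t (n+1) = 0 := by
        rcases mul_eq_zero.mp h3 with h|h
        · exact h
        · linarith
      linarith [ih]
  -- Φ is affine on (0, y 0], contradiction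
  apply hnotaffine
  have h0nondeg : x 0 ≠ y 0 := hx0y0.ne
  refine ⟨t 0, Φ (y 0) - t 0 * y 0, ?_⟩
  rintro s ⟨hs0, hsy0⟩
  set c : ℝ := t 0 with hcdef
  have hy0mem : y 0 ∈ Set.Ioo (0:ℝ) 1 := hy01 0
  have hεpos : 0 < min s (x 0) := lt_min hs0 (hx0 0)
  obtain ⟨K1, hK1⟩ := (hxlim.eventually (gt_mem_nhds hεpos)).exists_forall_of_atTop
  obtain ⟨k, hkK, hknd⟩ := hnondeg K1
  have hxk : x k < min s (x 0) := hK1 k hkK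
  set m : ℝ := min (x k) (y k) with hmdef
  set M : ℝ := max (x k) (y k) with hMdef
  have hm0 : 0 < m := lt_min (hx0 k) (hy0 k)
  have hmM : m < M := min_lt_max.mpr hknd
  have hmlex : m ≤ x k := min_le_left _ _
  have hms : m < s := lt_of_le_of_lt hmlex (lt_of_lt_of_le hxk (min_le_left _ _))
  have hmx0 : m < x 0 := lt_of_le_of_lt hmlex (lt_of_lt_of_le hxk (min_le_right _ _))
  have hmy0 : m < y 0 := lt_trans hmx0 hx0y0
  have hMy0 : M ≤ y 0 := max_le (hxley k) (hyley k)
  have hmmem : m ∈ Set.Ioo (0:ℝ) 1 := hminmem k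
  have hslopek : (Φ M - Φ m)/(M - m) = c := by
    rw [hMdef, hmdef, ← hσminmax k hknd, ← htnondeg k hknd, htconst k]
  have hslope0 : (Φ (y 0) - Φ (x 0))/(y 0 - x 0) = c := by
    rw [hcdef, htnondeg 0 h0nondeg, hσdef]
  have ha1 : (Φ M - Φ m)/(M - m) ≤ (Φ (y 0) - Φ m)/(y 0 - m) :=
    karamata_slope_mono Φ hΦ hmmem hy0mem hmM hmy0 le_rfl hMy0
  have ha2 : (Φ (y 0) - Φ m)/(y 0 - m) ≤ (Φ (y 0) - Φ (x 0))/(y 0 - x 0) :=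
    karamata_slope_mono Φ hΦ hmmem hy0mem hmy0 hx0y0 hmx0.le le_rfl
  have hsmy : (Φ (y 0) - Φ m)/(y 0 - m) = c := by
    rw [hslopek] at ha1
    rw [hslope0] at ha2
    linarith
  have hΦm : Φ (y 0) - Φ m = c * (y 0 - m) :=
    (div_eq_iff (by linarith : y 0 - m ≠ 0)).mp hsmy
  have hΦx0 : Φ (y 0) - Φ (x 0) = c * (y 0 - x 0) :=
    (div_eq_iff (by linarith : y 0 - x 0 ≠ 0)).mp hslope0
  rcases eq_or_lt_of_le hsy0 with rfl|hslt
  · ring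
  · have hsmem : s ∈ Set.Ioo (0:ℝ) 1 := ⟨hs0, lt_trans hslt hy0mem.2⟩
    have hup : (Φ s - Φ m)/(s - m) ≤ (Φ (y 0) - Φ m)/(y 0 - m) :=
      karamata_slope_mono Φ hΦ hmmem hy0mem hms hmy0 le_rfl hsy0
    rw [hsmy] at hup
    have hupper : Φ s - Φ m ≤ c * (s - m) := by
      have := (div_le_iff₀ (by linarith : (0:ℝ) < s - m)).mp hup
      linarith
    have hupper2 : Φ s ≤ Φ (y 0) - c * (y 0 - s) := by
      have hr : c * (y 0 - m) = c * (y 0 - s) + c * (s - m) := by ring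
      linarith
    have hlower : Φ (y 0) - c * (y 0 - s) ≤ Φ s := by
      rcases lt_trichotomy s (x 0) with h|h|h
      · have hsl := karamata_slope_mono Φ hΦ hsmem hy0mem h hx0y0 h.le hx0y0.le
        rw [hslope0] at hsl
        have h2 := (div_le_iff₀ (by linarith : (0:ℝ) < x 0 - s)).mp hsl
        have hr : c * (y 0 - x 0) + c * (x 0 - s) = c * (y 0 - s) := by ring
        linarith
      · rw [h]
        have hr : c * (y 0 - x 0) = c * (y 0 - x 0) := rfl
        linarith [hΦx0]
      · have hslmx : (Φ (x 0) - Φ m)/(x 0 - m) = c := by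
          rw [div_eq_iff (by linarith : x 0 - m ≠ 0)]
          have hr : c * (y 0 - m) - c * (y 0 - x 0) = c * (x 0 - m) := by ring
          linarith
        have hsl := karamata_slope_mono Φ hΦ hmmem hsmem hmx0 h hmx0.le h.le
        rw [hslmx] at hsl
        have h2 := (le_div_iff₀ (by linarith : (0:ℝ) < s - x 0)).mp hsl
        have hr : c * (y 0 - x 0) - c * (s - x 0) = c * (y 0 - s) := by ring
        linarith
    have hfin : Φ s = Φ (y 0) - c * (y 0 - s) := le_antisymm hupper2 hlower
    rw [hfin]
    ring
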